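/- For every integer n ≥ 2 and every real t with 0 < t ≤ 1, one has scal_B(n,t)/(2n²−1) < n/(2n−1) + (1/t² − 1). (This is the inequality scal(h_t)/(m−1) < λ^{1,1}(t) = μ₁ + (1/t²−1)φ₁ for the canonical variation h_t on SO(2n+1)/Tⁿ, where μ₁ = n/(2n−1) and φ₁ = 1.) -/

import Mathlib

/-- Scalar curvature of the canonical variation `h_t` of the normal homogeneous
metric on the full flag manifold `SO(2n+1)/Tⁿ`. -/
noncomputable def scalB (n : ℕ) (t : ℝ) : ℝ :=
  (5 * n ^ 3 - 2 * n ^ 2 * t ^ 4 + 8 * n ^ 2 * t ^ 2 - 7 * n ^ 2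
    + 2 * n * t ^ 4 - 4 * n * t ^ 2 + 2 * n) / (4 * (2 * n - 1) * t ^ 2)

/-- For `n ≥ 2` and `0 < t ≤ 1`,
`scal_B(n,t)/(2n²-1) < λ^{1,1}(t) = n/(2n-1) + (1/t² - 1)`
(here `m = 2n²`, `μ₁ = n/(2n-1)`, `φ₁ = 1`). -/
theorem scalB_div_lt_lambda11 (n : ℕ) (hn : 2 ≤ n) (t : ℝ) (ht0 : 0 < t) (ht1 : t ≤ 1) :
    scalB n t / (2 * n ^ 2 - 1) < n / (2 * n - 1) + (1 / t ^ 2 - 1) := by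
  have hN : (2 : ℝ) ≤ (n : ℝ) := by exact_mod_cast hn
  have h1 : (0 : ℝ) < 2 * (n : ℝ) - 1 := by linarith
  have h2 : (0 : ℝ) < 2 * (n : ℝ) ^ 2 - 1 := by nlinarith
  have ht2 : (0 : ℝ) < t ^ 2 := by positivity
  rw [scalB, div_div, div_lt_iff₀ (by positivity)]
  have key : 5 * (n:ℝ) ^ 3 - 2 * n ^ 2 * t ^ 4 + 8 * n ^ 2 * t ^ 2 - 7 * n ^ 2
      + 2 * n * t ^ 4 - 4 * n * t ^ 2 + 2 * n
      < 4 * (2 * n ^ 2 - 1) * ((n:ℝ) * t ^ 2 + (2 * n - 1) * (1 - t ^ 2)) := by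
    have hs1 : t ^ 2 ≤ 1 := by nlinarith
    have hB : (0:ℝ) ≤ (1 - t ^ 2) * (8 * (n:ℝ) ^ 3 + 4 - (2 * n ^ 2 - 2 * n) * (1 + t ^ 2)) := by
      apply mul_nonneg (by linarith)
      nlinarith [sq_nonneg ((n:ℝ) - 2)]
    nlinarith [hB, sq_nonneg ((n:ℝ) - 2), mul_pos (mul_pos (by linarith : (0:ℝ) < (n:ℝ)) (by linarith : (0:ℝ) < (n:ℝ))) (by linarith : (0:ℝ) < (n:ℝ))]
  have heq : ((n:ℝ) / (2 * n - 1) + (1 / t ^ 2 - 1)) * (4 * (2 * n - 1) * t ^ 2 * (2 * n ^ 2 - 1))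
      = 4 * (2 * (n:ℝ) ^ 2 - 1) * ((n:ℝ) * t ^ 2 + (2 * n - 1) * (1 - t ^ 2)) := by
    have hA : (n:ℝ) / (2 * n - 1) * (2 * n - 1) = n := div_mul_cancel₀ _ h1.ne'
    have hC : 1 / t ^ 2 * t ^ 2 = 1 := one_div_mul_cancel ht2.ne'
    linear_combination (4 * t ^ 2 * (2 * (n:ℝ) ^ 2 - 1)) * hA + (4 * (2 * (n:ℝ) - 1) * (2 * (n:ℝ) ^ 2 - 1)) * hC
  rw [heq]
  exact key
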